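/- Let C₁, C₂, …, C_N be computers (N ≥ 1) and let T ∈ (0,1). Then Z_{C₁⊘⋯⊘C_N}(T) = Z_{C₁}(T)⋯Z_{C_N}(T), F_{C₁⊘⋯⊘C_N}(T) = F_{C₁}(T) + ⋯ + F_{C_N}(T), E_{C₁⊘⋯⊘C_N}(T) = E_{C₁}(T) + ⋯ + E_{C_N}(T), and S_{C₁⊘⋯⊘C_N}(T) = S_{C₁}(T) + ⋯ + S_{C_N}(T). -/

import Mathlib

open Filter Topology

/-- A set of finite binary strings is prefix-free if no string in it is a
proper prefix of another string in it. -/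
def PrefixFree (S : Set (List Bool)) : Prop :=
  ∀ p ∈ S, ∀ q ∈ S, p <+: q → p = q

/-- A computer: a partial recursive function from finite binary strings to
finite binary strings whose domain is a nonempty prefix-free set. -/
structure Computer where
  f : List Bool →. List Bool
  partrec : Partrec f
  dom_nonempty : f.Dom.Nonempty
  dom_prefixFree : PrefixFree f.Dom

/-- A computer `U` is optimal if for each computer `C` there is `d ∈ ℕ` such
that every `p ∈ Dom C` admits `q` with `U(q) = C(p)` and `|q| ≤ |p| + d`. -/
def Optimal (U : Computer) : Prop :=
  ∀ C : Computer, ∃ d : ℕ, ∀ p ∈ C.f.Dom,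
    ∃ q : List Bool, U.f q = C.f p ∧ q.length ≤ p.length + d

/-- `H_C(s)`: the length of a shortest program for `C` printing `s`. -/
noncomputable def complexity (C : Computer) (s : List Bool) : ℕ :=
  sInf {n | ∃ p : List Bool, s ∈ C.f p ∧ p.length = n}

/-- The `i`-th bit (for `i = 0, 1, 2, …`) of the base-two expansion of
`α - ⌊α⌋` with infinitely many zeros. -/
noncomputable def bitOf (α : ℝ) (i : ℕ) : Bool :=
  decide (⌊(α - ⌊α⌋) * 2 ^ (i + 1)⌋ % 2 = 1)

/-- `α↾n`: the first `n` bits of the base-two expansion of `α - ⌊α⌋`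
with infinitely many zeros. -/
noncomputable def firstBits (α : ℝ) (n : ℕ) : List Bool :=
  (List.range n).map (bitOf α)

/-- A real `α` is computable if some total recursive `f : ℕ⁺ → ℚ` satisfies
`|α - f n| < 1/n` for all `n ≥ 1`. -/
def ComputableReal (α : ℝ) : Prop :=
  ∃ f : ℕ → ℚ, Computable f ∧ ∀ n : ℕ, 0 < n → |α - (f n : ℝ)| < 1 / n

/-- `α` is weakly Chaitin `T`-random (w.r.t. the computer `U`). -/
def WeaklyChaitinTRandom (U : Computer) (T α : ℝ) : Prop :=
  ∃ c : ℕ, ∀ n : ℕ, 0 < n → T * n - c ≤ (complexity U (firstBits α n) : ℝ)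

/-- `α` is Chaitin `T`-random (w.r.t. the computer `U`). -/
def ChaitinTRandom (U : Computer) (T α : ℝ) : Prop :=
  Tendsto (fun n : ℕ => (complexity U (firstBits α n) : ℝ) - T * n) atTop atTop

/-- `α` is `T`-compressible (w.r.t. the computer `U`): `H(α↾n) ≤ Tn + o(n)`. -/
def TCompressible (U : Computer) (T α : ℝ) : Prop :=
  ∃ g : ℕ → ℝ, Tendsto (fun n : ℕ => g n / n) atTop (nhds 0) ∧
    ∀ n : ℕ, 0 < n → (complexity U (firstBits α n) : ℝ) ≤ T * n + g n

/-- The Boltzmann factor `2^(-|p|/T)` of a program `p`. -/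
noncomputable def boltzmann (T : ℝ) (p : List Bool) : ℝ :=
  (2 : ℝ) ^ (-(p.length : ℝ) / T)

/-- Partition function `Z_C(T) = Σ_{p ∈ Dom C} 2^(-|p|/T)`. -/
noncomputable def Zfun (C : Computer) (T : ℝ) : ℝ :=
  ∑' p : C.f.Dom, boltzmann T p.1

/-- Free energy `F_C(T) = -T log₂ Z_C(T)`. -/
noncomputable def Ffun (C : Computer) (T : ℝ) : ℝ :=
  -T * Real.logb 2 (Zfun C T)

/-- Energy `E_C(T) = Z_C(T)⁻¹ Σ_{p ∈ Dom C} |p| 2^(-|p|/T)`. -/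
noncomputable def Efun (C : Computer) (T : ℝ) : ℝ :=
  (Zfun C T)⁻¹ * ∑' p : C.f.Dom, (p.1.length : ℝ) * boltzmann T p.1

/-- Statistical mechanical entropy `S_C(T) = (E_C(T) - F_C(T))/T`. -/
noncomputable def Sfun (C : Computer) (T : ℝ) : ℝ :=
  (Efun C T - Ffun C T) / T

/-- `𝒵(V)`: the set of `T ∈ (0,1)` with `Z_V(T)` computable. -/
def setZ (V : Computer) : Set ℝ := {T | T ∈ Set.Ioo 0 1 ∧ ComputableReal (Zfun V T)}

/-- `ℱ(V)`: the set of `T ∈ (0,1)` with `F_V(T)` computable. -/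
def setF (V : Computer) : Set ℝ := {T | T ∈ Set.Ioo 0 1 ∧ ComputableReal (Ffun V T)}

/-- `ℰ(V)`: the set of `T ∈ (0,1)` with `E_V(T)` computable. -/
def setE (V : Computer) : Set ℝ := {T | T ∈ Set.Ioo 0 1 ∧ ComputableReal (Efun V T)}

/-- `𝒮(V)`: the set of `T ∈ (0,1)` with `S_V(T)` computable. -/
def setS (V : Computer) : Set ℝ := {T | T ∈ Set.Ioo 0 1 ∧ ComputableReal (Sfun V T)}

/-- `FP_w` (w.r.t. the optimal computer `U` fixing `H`): the set of `T ∈ (0,1)`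
that are weakly Chaitin `T`-random and `T`-compressible. -/
def FPw (U : Computer) : Set ℝ :=
  {T | T ∈ Set.Ioo 0 1 ∧ WeaklyChaitinTRandom U T T ∧ TCompressible U T T}

/-- `FP` (w.r.t. the optimal computer `U` fixing `H`): the set of `T ∈ (0,1)`
that are Chaitin `T`-random and `T`-compressible. -/
def FP (U : Computer) : Set ℝ :=
  {T | T ∈ Set.Ioo 0 1 ∧ ChaitinTRandom U T T ∧ TCompressible U T T}

/-- A computer is physically reasonable if its domain contains two strings of
different lengths. -/
def PhysicallyReasonable (C : Computer) : Prop :=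
  ∃ p ∈ C.f.Dom, ∃ q ∈ C.f.Dom, p.length ≠ q.length

/-- A computable measure machine: `Z_C(1)` is a computable real. -/
def ComputableMeasureMachine (C : Computer) : Prop :=
  ComputableReal (Zfun C 1)

/-- `D` is the composition `C₀ ⊘ C₁ ⊘ ⋯ ⊘ C_{N-1}`: its domain consists of the
concatenations `p₀p₁⋯p_{N-1}` with each `pᵢ ∈ Dom Cᵢ`, and on such a
concatenation it returns `C₀(p₀)`. -/
def IsComposition {N : ℕ} (C : Fin N → Computer) (hN : 0 < N) (D : Computer) : Prop :=
  (∀ l, l ∈ D.f.Dom ↔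
      ∃ ps : Fin N → List Bool, (∀ i, ps i ∈ (C i).f.Dom) ∧ l = (List.ofFn ps).flatten) ∧
  (∀ ps : Fin N → List Bool, (∀ i, ps i ∈ (C i).f.Dom) →
      D.f ((List.ofFn ps).flatten) = (C ⟨0, hN⟩).f (ps ⟨0, hN⟩))

/-- A sequence of computers is recursive if a single partial recursive function
uniformly computes all of them. -/
def RecursiveSeq (V : ℕ → Computer) : Prop :=
  ∃ F : ℕ × List Bool →. List Bool, Partrec F ∧ ∀ n p, (V n).f p = F (n, p)

section Aux

open List Finset

/-- `2^(sum) = prod of 2^`. -/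
lemma two_rpow_sum {ι : Type*} (s : Finset ι) (a : ι → ℝ) :
    (2 : ℝ) ^ (∑ i ∈ s, a i) = ∏ i ∈ s, (2 : ℝ) ^ (a i) := by
  classical
  induction s using Finset.cons_induction with
  | empty => simp
  | cons i s hi ih => rw [Finset.sum_cons, Finset.prod_cons, Real.rpow_add two_pos, ih]

lemma boltzmann_pos (T : ℝ) (p : List Bool) : 0 < boltzmann T p :=
  Real.rpow_pos_of_pos two_pos _

lemma length_flatten_ofFn {N : ℕ} (ps : Fin N → List Bool) :
    ((List.ofFn ps).flatten.length : ℝ) = ∑ i, ((ps i).length : ℝ) := by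
  rw [List.length_flatten, List.map_ofFn]
  push_cast [List.sum_ofFn]
  rfl

lemma boltzmann_flatten (T : ℝ) {N : ℕ} (ps : Fin N → List Bool) :
    boltzmann T ((List.ofFn ps).flatten) = ∏ i, boltzmann T (ps i) := by
  unfold boltzmann
  rw [← two_rpow_sum]
  congr 1
  rw [length_flatten_ofFn, neg_div, Finset.sum_div, ← Finset.sum_neg_distrib]
  simp [neg_div]

lemma prod_ite_split {M : Type*} [CommMonoid M] {N : ℕ} (f g : Fin N → M) (i : Fin N) :
    (∏ j, if j = i then f j else g j) = f i * ∏ j ∈ Finset.univ.erase i, g j := by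
  classical
  rw [← Finset.mul_prod_erase Finset.univ (fun j => if j = i then f j else g j)
    (Finset.mem_univ i)]
  simp only [if_pos rfl]
  congr 1
  exact Finset.prod_congr rfl fun j hj => if_neg (Finset.ne_of_mem_erase hj)

/-- The key summability fact: for `0 < T < 1` the weighted Boltzmann sum over all
binary strings converges. -/
lemma summable_weighted_boltzmann {T : ℝ} (hT0 : 0 < T) (hT1 : T < 1) :
    Summable (fun p : List Bool => ((p.length : ℝ) + 1) * boltzmann T p) := by
  have hTinv : (1 : ℝ) < 1 / T := by rw [lt_div_iff₀ hT0]; linarith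
  set s : ℝ := (2 : ℝ) ^ ((1 : ℝ) - 1 / T) with hs
  have hs_pos : 0 < s := Real.rpow_pos_of_pos two_pos _
  have hs_lt : s < 1 := Real.rpow_lt_one_of_one_lt_of_neg one_lt_two (by linarith)
  have hsum : Summable (fun n : ℕ => ((n : ℝ) + 1) * s ^ n) := by
    have h1 : Summable (fun n : ℕ => (n : ℝ) ^ 1 * s ^ n) :=
      summable_pow_mul_geometric_of_norm_lt_one 1
        (by rw [Real.norm_eq_abs, abs_of_pos hs_pos]; exact hs_lt)
    have h2 : Summable (fun n : ℕ => s ^ n) := summable_geometric_of_lt_one hs_pos.le hs_lt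
    simpa [add_mul, pow_one] using h1.add h2
  set F : (Σ n : ℕ, Fin n → Bool) → ℝ :=
    fun x => ((x.1 : ℝ) + 1) * (2 : ℝ) ^ (-(x.1 : ℝ) / T) with hF
  have hkey : ∀ n : ℕ, (2 : ℝ) ^ n * (2 : ℝ) ^ (-(n : ℝ) / T) = s ^ n := by
    intro n
    have h2n : (2 : ℝ) ^ n = (2 : ℝ) ^ ((n : ℝ)) := (Real.rpow_natCast 2 n).symm
    have hsn : s ^ n = (2 : ℝ) ^ (((1 : ℝ) - 1 / T) * (n : ℝ)) := by
      rw [hs, ← Real.rpow_natCast s n, ← Real.rpow_mul two_pos.le]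
    rw [h2n, hsn, ← Real.rpow_add two_pos]
    congr 1
    ring
  have key : Summable F := by
    rw [summable_sigma_of_nonneg (by intro x; rw [hF]; positivity)]
    constructor
    · intro n; exact Summable.of_finite
    · have hrow : ∀ n : ℕ, (∑' v : Fin n → Bool, F ⟨n, v⟩)
          = ((n : ℝ) + 1) * s ^ n := by
        intro n
        show (∑' _ : Fin n → Bool, (((n : ℝ) + 1) * (2 : ℝ) ^ (-(n : ℝ) / T)))
          = ((n : ℝ) + 1) * s ^ n
        rw [tsum_const]
        have hcard : Nat.card (Fin n → Bool) = 2 ^ n := by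
          simp [Nat.card_eq_fintype_card]
        rw [hcard, nsmul_eq_mul]
        push_cast
        rw [← hkey n]
        ring
      rw [summable_congr hrow]
      exact hsum
  have := (Equiv.summable_iff (List.equivSigmaTuple (α := Bool)) (f := F)).mpr key
  refine this.congr fun p => ?_
  simp only [Function.comp, List.equivSigmaTuple, Equiv.coe_fn_mk, hF, boltzmann]

lemma summable_boltzmann {T : ℝ} (hT0 : 0 < T) (hT1 : T < 1) :
    Summable (fun p : List Bool => boltzmann T p) := by
  refine Summable.of_nonneg_of_le (fun p => (boltzmann_pos T p).le) (fun p => ?_)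
    (summable_weighted_boltzmann hT0 hT1)
  nlinarith [boltzmann_pos T p, Nat.cast_nonneg (α := ℝ) p.length]

lemma summable_len_boltzmann {T : ℝ} (hT0 : 0 < T) (hT1 : T < 1) :
    Summable (fun p : List Bool => (p.length : ℝ) * boltzmann T p) := by
  refine Summable.of_nonneg_of_le
    (fun p => mul_nonneg (Nat.cast_nonneg _) (boltzmann_pos T p).le) (fun p => ?_)
    (summable_weighted_boltzmann hT0 hT1)
  nlinarith [boltzmann_pos T p, Nat.cast_nonneg (α := ℝ) p.length]

lemma prefixFree_append {S : Set (List Bool)} (hS : PrefixFree S) {p q a b : List Bool}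
    (hp : p ∈ S) (hq : q ∈ S) (h : p ++ a = q ++ b) : p = q ∧ a = b := by
  have hpq : p = q := by
    rcases List.append_eq_append_iff.1 h with ⟨r, hr1, hr2⟩ | ⟨r, hr1, hr2⟩
    · exact (hS p hp q hq ⟨r, hr1.symm⟩)
    · exact (hS q hq p hp ⟨r, hr1.symm⟩).symm
  subst hpq
  exact ⟨rfl, List.append_cancel_left h⟩

lemma flatten_ofFn_inj : ∀ {N : ℕ} (C : Fin N → Computer) (ps qs : Fin N → List Bool),
    (∀ i, ps i ∈ (C i).f.Dom) → (∀ i, qs i ∈ (C i).f.Dom) →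
    (List.ofFn ps).flatten = (List.ofFn qs).flatten → ps = qs := by
  intro N
  induction N with
  | zero => intro C ps qs _ _ _; funext i; exact i.elim0
  | succ n ih =>
      intro C ps qs hps hqs h
      rw [List.ofFn_succ, List.ofFn_succ, List.flatten_cons, List.flatten_cons] at h
      obtain ⟨h0, hrest⟩ :=
        prefixFree_append (C 0).dom_prefixFree (hps 0) (hqs 0) h
      have htail := ih (fun i => C i.succ) (fun i => ps i.succ) (fun i => qs i.succ)
        (fun i => hps i.succ) (fun i => hqs i.succ) hrest
      funext i
      refine Fin.cases h0 (fun j => ?_) i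
      exact congrFun htail j

/-- Product of tsums over a finite product of types, in `ℝ≥0∞`. -/
lemma tsum_pi_prod : ∀ {N : ℕ} (α : Fin N → Type) (g : ∀ i, α i → ENNReal),
    ∑' f : ∀ i, α i, ∏ i, g i (f i) = ∏ i, ∑' x : α i, g i x := by
  intro N
  induction N with
  | zero =>
      intro α g
      simp only [Finset.univ_eq_empty, Finset.prod_empty]
      exact tsum_eq_single (fun i => i.elim0) (fun b hb => absurd (Subsingleton.elim b _) hb)
  | succ n ih =>
      intro α g
      rw [← (Fin.consEquiv α).tsum_eq (fun f => ∏ i, g i (f i)), ENNReal.tsum_prod']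
      have hsplit : ∀ (a : α 0) (b : ∀ i : Fin n, α i.succ),
          (∏ i, g i ((Fin.consEquiv α) (a, b) i))
            = g 0 a * ∏ i : Fin n, g i.succ (b i) := by
        intro a b
        rw [Fin.prod_univ_succ]
        simp [Fin.consEquiv]
      calc (∑' (a : α 0) (b : ∀ i : Fin n, α i.succ), ∏ i, g i ((Fin.consEquiv α) (a, b) i))
          = ∑' (a : α 0), g 0 a * ∑' b : ∀ i : Fin n, α i.succ, ∏ i : Fin n, g i.succ (b i) := by
            refine tsum_congr fun a => ?_
            rw [tsum_congr fun b => hsplit a b, ENNReal.tsum_mul_left]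
        _ = (∑' a : α 0, g 0 a) * ∑' b : ∀ i : Fin n, α i.succ, ∏ i : Fin n, g i.succ (b i) :=
            ENNReal.tsum_mul_right
        _ = ∏ i, ∑' x : α i, g i x := by
            rw [ih (fun i => α i.succ) (fun i => g i.succ), Fin.prod_univ_succ]

end Aux

/-- For `T ∈ (0,1)`, the thermodynamic quantities of a
composition are the product (for `Z`) resp. sums (for `F`, `E`, `S`) of those
of the components. -/
theorem composition_thermodynamic_quantities {N : ℕ} (hN : 0 < N)
    (C : Fin N → Computer) (D : Computer) (hD : IsComposition C hN D)
    (T : ℝ) (hT : T ∈ Set.Ioo (0 : ℝ) 1) :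
    Zfun D T = ∏ i, Zfun (C i) T ∧
    Ffun D T = ∑ i, Ffun (C i) T ∧
    Efun D T = ∑ i, Efun (C i) T ∧
    Sfun D T = ∑ i, Sfun (C i) T := by
  classical
  obtain ⟨hT0, hT1⟩ := hT
  have hb := summable_boltzmann hT0 hT1
  have hw := summable_len_boltzmann hT0 hT1
  -- the bijection between the product of domains and the domain of `D`
  have hmem : ∀ ps : ∀ i, ↥((C i).f.Dom),
      (List.ofFn fun i => ((ps i : List Bool))).flatten ∈ D.f.Dom := fun ps =>
    (hD.1 _).mpr ⟨fun i => (ps i : List Bool), fun i => (ps i).2, rfl⟩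
  let φ : (∀ i, ↥((C i).f.Dom)) → ↥(D.f.Dom) := fun ps => ⟨_, hmem ps⟩
  have hφbij : Function.Bijective φ := by
    constructor
    · intro ps qs h
      have hfl : (List.ofFn fun i => ((ps i : List Bool))).flatten
          = (List.ofFn fun i => ((qs i : List Bool))).flatten := congrArg Subtype.val h
      have := flatten_ofFn_inj C (fun i => (ps i : List Bool)) (fun i => (qs i : List Bool))
        (fun i => (ps i).2) (fun i => (qs i).2) hfl
      funext i; exact Subtype.ext (congrFun this i)
    · rintro ⟨l, hl⟩
      obtain ⟨ps, hps, rfl⟩ := (hD.1 l).mp hl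
      exact ⟨fun i => ⟨ps i, hps i⟩, rfl⟩
  have htrans : ∀ f : List Bool → ENNReal,
      (∑' l : D.f.Dom, f l.1)
        = ∑' ps : (∀ i, ↥((C i).f.Dom)),
            f ((List.ofFn fun i => ((ps i : List Bool))).flatten) := fun f =>
    ((Equiv.ofBijective φ hφbij).tsum_eq (fun l : ↥(D.f.Dom) => f l.1)).symm
  -- `ℝ≥0∞`-valued partition sums
  have hZE : ∀ i, (∑' p : (C i).f.Dom, ENNReal.ofReal (boltzmann T p.1))
      = ENNReal.ofReal (Zfun (C i) T) := fun i =>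
    (ENNReal.ofReal_tsum_of_nonneg (fun p => (boltzmann_pos T _).le) (hb.subtype _)).symm
  have hWE : ∀ i, (∑' p : (C i).f.Dom, ENNReal.ofReal ((p.1.length : ℝ) * boltzmann T p.1))
      = ENNReal.ofReal (∑' p : (C i).f.Dom, (p.1.length : ℝ) * boltzmann T p.1) := fun i =>
    (ENNReal.ofReal_tsum_of_nonneg
      (fun p => mul_nonneg (Nat.cast_nonneg _) (boltzmann_pos T _).le) (hw.subtype _)).symm
  -- ENNReal product identity for Z
  have hZmul : (∑' l : D.f.Dom, ENNReal.ofReal (boltzmann T l.1))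
      = ∏ i, ∑' p : (C i).f.Dom, ENNReal.ofReal (boltzmann T p.1) := by
    rw [htrans (fun p => ENNReal.ofReal (boltzmann T p))]
    have h1 : ∀ ps : (∀ i, ↥((C i).f.Dom)),
        ENNReal.ofReal (boltzmann T ((List.ofFn fun i => ((ps i : List Bool))).flatten))
        = ∏ i, ENNReal.ofReal (boltzmann T ((ps i : List Bool))) := by
      intro ps
      rw [boltzmann_flatten,
        ENNReal.ofReal_prod_of_nonneg (fun i _ => (boltzmann_pos T _).le)]
    rw [tsum_congr h1]
    exact tsum_pi_prod (fun i => ↥((C i).f.Dom))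
      (fun i (x : ↥((C i).f.Dom)) => ENNReal.ofReal (boltzmann T x.1))
  -- real product identity for the weight of a flatten
  have hwfl : ∀ ps : Fin N → List Bool,
      ((List.ofFn ps).flatten.length : ℝ) * boltzmann T ((List.ofFn ps).flatten)
      = ∑ i, ∏ j, (if j = i then ((ps j).length : ℝ) * boltzmann T (ps j)
          else boltzmann T (ps j)) := by
    intro ps
    rw [boltzmann_flatten, length_flatten_ofFn, Finset.sum_mul]
    refine Finset.sum_congr rfl fun i _ => ?_
    rw [prod_ite_split (fun j => ((ps j).length : ℝ) * boltzmann T (ps j))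
        (fun j => boltzmann T (ps j)) i,
      ← Finset.mul_prod_erase Finset.univ (fun j => boltzmann T (ps j)) (Finset.mem_univ i)]
    ring
  -- ENNReal identity for the weighted sum
  have hWmul : (∑' l : D.f.Dom, ENNReal.ofReal ((l.1.length : ℝ) * boltzmann T l.1))
      = ∑ i, ∏ j, (if j = i
          then ∑' p : (C j).f.Dom, ENNReal.ofReal ((p.1.length : ℝ) * boltzmann T p.1)
          else ∑' p : (C j).f.Dom, ENNReal.ofReal (boltzmann T p.1)) := by
    rw [htrans (fun p => ENNReal.ofReal ((p.length : ℝ) * boltzmann T p))]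
    have h1 : ∀ ps : (∀ i, ↥((C i).f.Dom)),
        ENNReal.ofReal
            ((((List.ofFn fun i => ((ps i : List Bool))).flatten.length : ℝ))
              * boltzmann T ((List.ofFn fun i => ((ps i : List Bool))).flatten))
        = ∑ i, ∏ j, (if j = i
            then ENNReal.ofReal (((ps j : List Bool).length : ℝ) * boltzmann T (ps j : List Bool))
            else ENNReal.ofReal (boltzmann T (ps j : List Bool))) := by
      intro ps
      rw [hwfl]
      rw [ENNReal.ofReal_sum_of_nonneg (fun i _ => Finset.prod_nonneg fun j _ => by
        split_ifs
        · exact mul_nonneg (Nat.cast_nonneg _) (boltzmann_pos T _).le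
        · exact (boltzmann_pos T _).le)]
      refine Finset.sum_congr rfl fun i _ => ?_
      rw [ENNReal.ofReal_prod_of_nonneg (fun j _ => by
        split_ifs
        · exact mul_nonneg (Nat.cast_nonneg _) (boltzmann_pos T _).le
        · exact (boltzmann_pos T _).le)]
      refine Finset.prod_congr rfl fun j _ => ?_
      split_ifs <;> rfl
    rw [tsum_congr h1, Summable.tsum_finsetSum (fun i _ => ENNReal.summable)]
    refine Finset.sum_congr rfl fun i _ => ?_
    rw [tsum_pi_prod (fun j => ↥((C j).f.Dom))
      (fun j (x : ↥((C j).f.Dom)) => if j = i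
        then ENNReal.ofReal ((x.1.length : ℝ) * boltzmann T x.1)
        else ENNReal.ofReal (boltzmann T x.1))]
    refine Finset.prod_congr rfl fun j _ => ?_
    by_cases h : j = i <;> simp [h]
  -- Z
  have hZr : Zfun D T = ∏ i, Zfun (C i) T := by
    have h1 : ENNReal.ofReal (Zfun D T) = ∏ i, ENNReal.ofReal (Zfun (C i) T) := by
      unfold Zfun
      rw [ENNReal.ofReal_tsum_of_nonneg (fun p => (boltzmann_pos T _).le) (hb.subtype _),
        hZmul]
      exact Finset.prod_congr rfl fun i _ => hZE i
    calc Zfun D T = (ENNReal.ofReal (Zfun D T)).toReal :=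
          (ENNReal.toReal_ofReal (tsum_nonneg fun p => (boltzmann_pos T _).le)).symm
      _ = (∏ i, ENNReal.ofReal (Zfun (C i) T)).toReal := by rw [h1]
      _ = ∏ i, (ENNReal.ofReal (Zfun (C i) T)).toReal := ENNReal.toReal_prod _ _
      _ = ∏ i, Zfun (C i) T := Finset.prod_congr rfl fun i _ =>
          ENNReal.toReal_ofReal (tsum_nonneg fun p => (boltzmann_pos T _).le)
  -- positivity of the component partition functions
  have hZpos : ∀ i, 0 < Zfun (C i) T := by
    intro i
    obtain ⟨p₀, hp₀⟩ := (C i).dom_nonempty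
    exact Summable.tsum_pos (hb.subtype _) (fun p => (boltzmann_pos T _).le) ⟨p₀, hp₀⟩
      (boltzmann_pos T _)
  -- the weighted sum in the reals
  have hWr : (∑' l : D.f.Dom, (l.1.length : ℝ) * boltzmann T l.1)
      = ∑ i, ∏ j, (if j = i
          then ∑' p : (C j).f.Dom, (p.1.length : ℝ) * boltzmann T p.1
          else Zfun (C j) T) := by
    have hnn1 : (0 : ℝ) ≤ ∑' l : D.f.Dom, (l.1.length : ℝ) * boltzmann T l.1 :=
      tsum_nonneg fun p => mul_nonneg (Nat.cast_nonneg _) (boltzmann_pos T _).le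
    have hnn2 : (0 : ℝ) ≤ ∑ i, ∏ j, (if j = i
          then ∑' p : (C j).f.Dom, (p.1.length : ℝ) * boltzmann T p.1
          else Zfun (C j) T) := by
      refine Finset.sum_nonneg fun i _ => Finset.prod_nonneg fun j _ => ?_
      split_ifs
      · exact tsum_nonneg fun p => mul_nonneg (Nat.cast_nonneg _) (boltzmann_pos T _).le
      · exact tsum_nonneg fun p => (boltzmann_pos T _).le
    rw [← ENNReal.ofReal_eq_ofReal_iff hnn1 hnn2,
      ENNReal.ofReal_tsum_of_nonneg
        (fun p => mul_nonneg (Nat.cast_nonneg _) (boltzmann_pos T _).le) (hw.subtype _),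
      hWmul,
      ENNReal.ofReal_sum_of_nonneg (fun i _ => Finset.prod_nonneg fun j _ => by
        split_ifs
        · exact tsum_nonneg fun p => mul_nonneg (Nat.cast_nonneg _) (boltzmann_pos T _).le
        · exact tsum_nonneg fun p => (boltzmann_pos T _).le)]
    refine Finset.sum_congr rfl fun i _ => ?_
    rw [ENNReal.ofReal_prod_of_nonneg (fun j _ => by
      split_ifs
      · exact tsum_nonneg fun p => mul_nonneg (Nat.cast_nonneg _) (boltzmann_pos T _).le
      · exact tsum_nonneg fun p => (boltzmann_pos T _).le)]
    refine Finset.prod_congr rfl fun j _ => ?_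
    by_cases h : j = i
    · simp only [h, if_pos rfl]
      exact hWE j
    · simp only [if_neg h]
      exact hZE j
  -- F
  have hFr : Ffun D T = ∑ i, Ffun (C i) T := by
    unfold Ffun
    rw [hZr, Real.logb_prod _ _ (fun i _ => (hZpos i).ne'), Finset.mul_sum]
  -- E
  have hEr : Efun D T = ∑ i, Efun (C i) T := by
    unfold Efun
    rw [hZr, hWr, Finset.mul_sum]
    refine Finset.sum_congr rfl fun i _ => ?_
    rw [prod_ite_split
        (fun j => ∑' p : (C j).f.Dom, (p.1.length : ℝ) * boltzmann T p.1)
        (fun j => Zfun (C j) T) i,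
      ← Finset.mul_prod_erase Finset.univ (fun j => Zfun (C j) T) (Finset.mem_univ i)]
    have hPne : (∏ j ∈ Finset.univ.erase i, Zfun (C j) T) ≠ 0 :=
      Finset.prod_ne_zero_iff.mpr fun j _ => (hZpos j).ne'
    rw [mul_inv, mul_mul_mul_comm, inv_mul_cancel₀ hPne, mul_one]
  -- S
  have hSr : Sfun D T = ∑ i, Sfun (C i) T := by
    unfold Sfun
    rw [hEr, hFr, ← Finset.sum_sub_distrib, Finset.sum_div]
  exact ⟨hZr, hFr, hEr, hSr⟩
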